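/- Let d ≥ 1 be an even integer, p an odd prime, n ≥ 1 a natural number, and v = ord_p(n) the p-adic valuation of n. Then for every integer h ≥ 1: A_d(p^h, n) = ((p−1)/p) · (ε_p^d · p^{1−d/2})^h if 1 ≤ h ≤ v; A_d(p^h, n) = −(ε_p^d · p^{1−d/2})^{v+1} · p^{−1} if h = v+1; and A_d(p^h, n) = 0 if h > v+1. -/

import Mathlib

open Complex Real Finset

/-- The Gauss sum `S(q,a) = Σ_{t=1}^{q} e^{2πi a t²/q}`. -/
noncomputable def gaussSumS (q : ℕ) (a : ℕ) : ℂ :=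
  ∑ t ∈ Finset.Icc 1 q, Complex.exp (2 * π * I * (a : ℂ) * (t : ℂ) ^ 2 / (q : ℂ))

/-- `A_d(q,n) = Σ_{1 ≤ a ≤ q, gcd(a,q)=1} (q⁻¹ S(q,a))^d e^{-2πi n a/q}`. -/
noncomputable def Acoef (d q n : ℕ) : ℂ :=
  ∑ a ∈ (Finset.Icc 1 q).filter fun a => Nat.gcd a q = 1,
    ((q : ℂ)⁻¹ * gaussSumS q a) ^ d * Complex.exp (-(2 * π * I) * (n : ℂ) * (a : ℂ) / (q : ℂ))

/-- `ε_p` for an odd prime `p`: `1` if `p ≡ 1 (mod 4)`, `i` if `p ≡ 3 (mod 4)`. -/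
noncomputable def epsP (p : ℕ) : ℂ := if p % 4 = 1 then 1 else Complex.I

noncomputable def expQ (q : ℕ) (x : ℤ) : ℂ := Complex.exp (2 * π * I * (x : ℂ) / (q : ℂ))

lemma expQ_zero (q : ℕ) : expQ q 0 = 1 := by simp [expQ]

lemma expQ_add (q : ℕ) (x y : ℤ) : expQ q (x + y) = expQ q x * expQ q y := by
  rw [expQ, expQ, expQ, ← Complex.exp_add]
  congr 1
  push_cast
  ring

lemma expQ_mul_self (q : ℕ) (x : ℤ) : expQ q ((q : ℤ) * x) = 1 := by
  rcases Nat.eq_zero_or_pos q with h | h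
  · simp [expQ, h]
  · rw [expQ]
    have hq : (q : ℂ) ≠ 0 := Nat.cast_ne_zero.mpr h.ne'
    have : 2 * π * I * (((q : ℤ) * x : ℤ) : ℂ) / (q : ℂ) = (x : ℂ) * (2 * π * I) := by
      push_cast
      field_simp
    rw [this, Complex.exp_int_mul_two_pi_mul_I]

lemma expQ_eq_one_iff {q : ℕ} (hq : 0 < q) (x : ℤ) : expQ q x = 1 ↔ (q : ℤ) ∣ x := by
  constructor
  · intro hx
    rw [expQ, Complex.exp_eq_one_iff] at hx
    obtain ⟨k, hk⟩ := hx
    have hq : (q : ℂ) ≠ 0 := Nat.cast_ne_zero.mpr hq.ne'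
    have h2 : (2 * π * I : ℂ) ≠ 0 := by
      simp [Real.pi_ne_zero, Complex.I_ne_zero]
    have : (x : ℂ) = (k : ℂ) * q := by
      field_simp at hk
      have h3 : 2 * (π:ℂ) * I * (x:ℂ) = 2 * (π:ℂ) * I * ((k:ℂ) * q) := by
        linear_combination (2 * (π:ℂ) * I) * hk
      exact mul_left_cancel₀ h2 h3
    refine ⟨k, ?_⟩
    have : (x : ℂ) = (((q : ℤ) * k : ℤ) : ℂ) := by push_cast; linear_combination this
    exact_mod_cast this
  · rintro ⟨k, rfl⟩
    exact expQ_mul_self q k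

lemma expQ_pow (q : ℕ) (x : ℤ) (k : ℕ) : expQ q (x * k) = expQ q x ^ k := by
  induction k with
  | zero => simp [expQ_zero]
  | succ k ih =>
    have : x * ((k : ℤ) + 1) = x * k + x := by ring
    rw [Nat.cast_succ, this, expQ_add, ih, pow_succ]

lemma expQ_cancel (A B : ℕ) (hA : A ≠ 0) (c : ℤ) : expQ (A * B) ((A : ℤ) * c) = expQ B c := by
  rcases Nat.eq_zero_or_pos B with h | h
  · subst h; simp only [Nat.mul_zero]; rw [expQ, expQ]; norm_num
  · rw [expQ, expQ]
    congr 1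
    have hA' : (A : ℂ) ≠ 0 := Nat.cast_ne_zero.mpr hA
    have hB' : (B : ℂ) ≠ 0 := Nat.cast_ne_zero.mpr h.ne'
    push_cast
    field_simp

lemma sum_expQ {q : ℕ} (hq : 0 < q) (c : ℤ) :
    ∑ a ∈ Finset.range q, expQ q (c * a) = if (q : ℤ) ∣ c then (q : ℂ) else 0 := by
  split_ifs with h
  · obtain ⟨k, rfl⟩ := h
    have : ∀ a ∈ Finset.range q, expQ q ((q : ℤ) * k * a) = 1 := by
      intro a _
      rw [mul_assoc, expQ_mul_self]
    rw [Finset.sum_congr rfl this]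
    simp
  · have hx : expQ q c ≠ 1 := fun hc => h ((expQ_eq_one_iff hq c).mp hc)
    have : ∀ a ∈ Finset.range q, expQ q (c * a) = expQ q c ^ a := by
      intro a _; exact expQ_pow q c a
    rw [Finset.sum_congr rfl this, geom_sum_eq hx]
    have : expQ q c ^ q = 1 := by
      rw [← expQ_pow]
      rw [mul_comm]
      exact expQ_mul_self q c
    rw [this]
    simp

noncomputable def SS (q a : ℕ) : ℂ := ∑ t ∈ Finset.range q, expQ q ((a : ℤ) * (t : ℤ) ^ 2)

lemma sum_Icc_eq_sum_range_of_periodic {q : ℕ} (hq : 1 ≤ q) (f : ℕ → ℂ) (hf : f q = f 0) :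
    ∑ t ∈ Finset.Icc 1 q, f t = ∑ t ∈ Finset.range q, f t := by
  have h1 : Finset.Icc 1 q = Finset.Ico 1 (q + 1) := by ext; simp
  have h2 : ∑ t ∈ Finset.Ico 1 (q + 1), f t = ∑ i ∈ Finset.range q, f (i + 1) := by
    rw [Finset.sum_Ico_eq_sum_range]
    simp [Nat.add_comm]
  rw [h1, h2]
  have h3 := Finset.sum_range_succ' f q
  have h4 := Finset.sum_range_succ f q
  -- h3 : ∑ i in range (q+1), f i = ∑ i in range q, f (i+1) + f 0
  -- h4 : ∑ i in range (q+1), f i = ∑ i in range q, f i + f q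
  have := h3.symm.trans h4
  rw [hf] at this
  linear_combination this

lemma gaussSumS_eq_SS {q : ℕ} (hq : 1 ≤ q) (a : ℕ) : gaussSumS q a = SS q a := by
  have hterm : ∀ t : ℕ, Complex.exp (2 * π * I * (a : ℂ) * (t : ℂ) ^ 2 / (q : ℂ))
      = expQ q ((a : ℤ) * (t : ℤ) ^ 2) := by
    intro t
    rw [expQ]
    congr 1
    push_cast
    ring
  rw [gaussSumS]
  simp_rw [hterm]
  exact sum_Icc_eq_sum_range_of_periodic hq _ (by
    have : ((a : ℤ) * (q : ℤ) ^ 2) = (q : ℤ) * ((a : ℤ) * q) := by ring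
    rw [this, expQ_mul_self]
    simp [expQ_zero])

lemma sum_range_mul_decomp (A B : ℕ) (hA : 0 < A) (f : ℕ → ℂ) :
    ∑ t ∈ Finset.range (A * B), f t
      = ∑ uv ∈ Finset.range A ×ˢ Finset.range B, f (uv.1 + A * uv.2) := by
  refine Finset.sum_nbij' (i := fun t => (t % A, t / A)) (j := fun uv => uv.1 + A * uv.2)
    ?_ ?_ ?_ ?_ ?_
  · intro t ht
    simp only [Finset.mem_range, Finset.mem_product] at *
    exact ⟨Nat.mod_lt _ hA, Nat.div_lt_of_lt_mul (by omega)⟩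
  · intro uv huv
    simp only [Finset.mem_range, Finset.mem_product] at *
    obtain ⟨h1, h2⟩ := huv
    have h3 : A * (uv.2 + 1) = A * uv.2 + A := Nat.mul_succ A uv.2
    have h4 : A * (uv.2 + 1) ≤ A * B := Nat.mul_le_mul_left A (by omega)
    omega
  · intro t _
    show t % A + A * (t / A) = t
    exact Nat.mod_add_div t A
  · intro uv huv
    simp only [Finset.mem_range, Finset.mem_product] at huv
    ext
    · simp [Nat.add_mul_mod_self_left, Nat.mod_eq_of_lt huv.1]
    · simp [Nat.add_mul_div_left _ _ hA, Nat.div_eq_of_lt huv.1]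
  · intro t _
    show f t = f (t % A + A * (t / A))
    rw [Nat.mod_add_div]

lemma SS_reduction {p : ℕ} (hp : p.Prime) (hpodd : Odd p) (h : ℕ) (a : ℕ) (ha : ¬ p ∣ a) :
    SS (p ^ (h + 2)) a = (p : ℂ) * SS (p ^ h) a := by
  have hp0 : 0 < p := hp.pos
  have hA : 0 < p ^ (h + 1) := Nat.pow_pos hp0
  have hq : p ^ (h + 2) = p ^ (h + 1) * p := by ring
  set A := p ^ (h + 1) with hAdef
  set q := p ^ (h + 2) with hqdef
  have hdec := sum_range_mul_decomp A p hA (fun t => expQ q ((a : ℤ) * (t : ℤ) ^ 2))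
  rw [← hq] at hdec
  rw [SS, hdec]
  have hterm : ∀ uv ∈ Finset.range A ×ˢ Finset.range p,
      expQ q ((a : ℤ) * ((uv.1 + A * uv.2 : ℕ) : ℤ) ^ 2)
        = expQ q ((a : ℤ) * (uv.1 : ℤ) ^ 2) * expQ p ((2 * (a : ℤ) * uv.1) * uv.2) := by
    rintro ⟨u, v⟩ _
    have hA2 : (A : ℤ) * (A : ℤ) = (q : ℤ) * (p ^ h : ℕ) := by
      rw [hAdef, hqdef]; push_cast; ring
    have key : (a : ℤ) * ((u + A * v : ℕ) : ℤ) ^ 2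
        = ((a : ℤ) * (u : ℤ) ^ 2 + (A : ℤ) * ((2 * (a : ℤ) * u) * v))
          + (q : ℤ) * ((p ^ h : ℕ) * a * v ^ 2) := by
      push_cast
      push_cast at hA2
      linear_combination ((a : ℤ) * (v:ℤ)^2) * hA2
    rw [key, expQ_add, expQ_add, expQ_mul_self, mul_one]
    congr 1
    have : q = A * p := hq
    rw [this, expQ_cancel A p hA.ne']
  rw [Finset.sum_congr rfl hterm, Finset.sum_product]
  have hinner : ∀ u ∈ Finset.range A,
      ∑ v ∈ Finset.range p, expQ q ((a : ℤ) * (u : ℤ) ^ 2) * expQ p ((2 * (a : ℤ) * u) * v)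
        = if p ∣ u then expQ q ((a : ℤ) * (u : ℤ) ^ 2) * p else 0 := by
    intro u _
    rw [← Finset.mul_sum, sum_expQ hp0]
    have hdvd : ((p : ℤ) ∣ 2 * (a : ℤ) * u) ↔ p ∣ u := by
      constructor
      · intro hd
        have hp2 : p ≠ 2 := by rintro rfl; exact (by decide : ¬ Odd 2) hpodd
        have h2 : ¬ (p : ℤ) ∣ 2 := by
          intro hc
          have hc' : p ∣ 2 := by exact_mod_cast hc
          exact hp2 ((Nat.prime_dvd_prime_iff_eq hp Nat.prime_two).mp hc')
        have hap : ¬ (p : ℤ) ∣ (a : ℤ) := fun hc => ha (Int.natCast_dvd_natCast.mp hc)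
        have hprime : Prime (p : ℤ) := Int.prime_iff_natAbs_prime.mpr (by simpa using hp)
        rcases hprime.dvd_mul.mp hd with hd' | hd'
        · rcases hprime.dvd_mul.mp hd' with hd'' | hd''
          · exact absurd hd'' h2
          · exact absurd hd'' hap
        · exact Int.natCast_dvd_natCast.mp hd'
      · intro hd
        exact Dvd.dvd.mul_left (Int.natCast_dvd_natCast.mpr hd) _
    by_cases hd : p ∣ u
    · rw [if_pos (hdvd.mpr hd), if_pos hd]
    · rw [if_neg (fun hc => hd (hdvd.mp hc)), if_neg hd, mul_zero]
  rw [Finset.sum_congr rfl hinner, Finset.sum_ite, Finset.sum_const_zero, add_zero]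
  -- now reindex multiples of p
  have hbij : ∑ u ∈ Finset.range A |>.filter (fun u => p ∣ u),
      expQ q ((a : ℤ) * (u : ℤ) ^ 2) * p
      = ∑ w ∈ Finset.range (p ^ h), expQ q ((a : ℤ) * ((p * w : ℕ) : ℤ) ^ 2) * p := by
    refine (Finset.sum_nbij' (i := fun u => u / p) (j := fun w => p * w) ?_ ?_ ?_ ?_ ?_).symm.symm
    · intro u hu
      simp only [Finset.mem_filter, Finset.mem_range] at hu
      simp only [Finset.mem_range]
      obtain ⟨hu1, k, rfl⟩ := hu
      rw [Nat.mul_div_cancel_left _ hp0]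
      have hA' : p ^ (h+1) = p * p ^ h := by ring
      rw [hAdef, hA'] at hu1
      exact lt_of_mul_lt_mul_left hu1 (Nat.zero_le p)
    · intro w hw
      simp only [Finset.mem_range] at hw
      simp only [Finset.mem_filter, Finset.mem_range]
      constructor
      · have hA' : p ^ (h+1) = p * p ^ h := by ring
        rw [hAdef, hA']
        exact (Nat.mul_lt_mul_left hp0).mpr hw
      · exact Dvd.intro _ rfl
    · intro u hu
      simp only [Finset.mem_filter] at hu
      obtain ⟨_, k, rfl⟩ := hu
      show p * (p * k / p) = p * k
      rw [Nat.mul_div_cancel_left _ hp0]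
    · intro w _
      show p * w / p = w
      rw [Nat.mul_div_cancel_left _ hp0]
    · intro u hu
      simp only [Finset.mem_filter] at hu
      obtain ⟨_, k, rfl⟩ := hu
      show _ = expQ q ((a:ℤ) * ((p * (p * k / p) : ℕ) : ℤ) ^ 2) * p
      rw [Nat.mul_div_cancel_left _ hp0]
  rw [hbij]
  have hterm2 : ∀ w ∈ Finset.range (p ^ h),
      expQ q ((a : ℤ) * ((p * w : ℕ) : ℤ) ^ 2) * (p : ℂ)
        = (p : ℂ) * expQ (p ^ h) ((a : ℤ) * (w : ℤ) ^ 2) := by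
    intro w _
    rw [mul_comm]
    congr 1
    have harg : (a : ℤ) * ((p * w : ℕ) : ℤ) ^ 2 = ((p ^ 2 : ℕ) : ℤ) * ((a : ℤ) * (w : ℤ) ^ 2) := by
      push_cast; ring
    have hq2 : q = p ^ 2 * p ^ h := by rw [hqdef]; ring
    rw [harg, hq2, expQ_cancel (p ^ 2) (p ^ h) (by positivity)]
  rw [Finset.sum_congr rfl hterm2, ← Finset.mul_sum, SS]

lemma SS_sq_prime {p : ℕ} (hp : p.Prime) (hpodd : Odd p) (a : ℕ) (ha : ¬ p ∣ a) :
    SS p a ^ 2 = epsP p ^ 2 * (p : ℂ) := by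
  haveI := Fact.mk hp
  have hp2 : p ≠ 2 := by rintro rfl; exact (by decide : ¬ Odd 2) hpodd
  have hF : ringChar (ZMod p) ≠ 2 := by rw [ZMod.ringChar_zmod_n]; exact hp2
  set ψ := ZMod.stdAddChar (N := p) with hψdef
  set χ := (quadraticChar (ZMod p)).ringHomComp (Int.castRingHom ℂ) with hχdef
  set α : ZMod p := ((a : ℕ) : ZMod p) with hαdef
  have hα : α ≠ 0 := by
    rw [hαdef, Ne, ZMod.natCast_eq_zero_iff]
    exact ha
  -- Step 1 : SS p a as a sum over ZMod p
  have step1 : SS p a = ∑ x : ZMod p, ψ (α * x ^ 2) := by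
    rw [SS]
    refine Finset.sum_nbij' (i := fun t => ((t : ZMod p))) (j := fun x => x.val)
      (fun t _ => Finset.mem_univ _) (fun x _ => Finset.mem_range.mpr (ZMod.val_lt x)) ?_ ?_ ?_
    · intro t ht
      exact ZMod.val_natCast_of_lt (Finset.mem_range.mp ht)
    · intro x _
      simp [ZMod.natCast_val, ZMod.cast_id]
    · intro t _
      show expQ p ((a : ℤ) * (t : ℤ) ^ 2) = ψ (α * ((t : ℕ) : ZMod p) ^ 2)
      rw [hψdef]
      have : α * ((t : ℕ) : ZMod p) ^ 2 = (((a : ℤ) * (t : ℤ) ^ 2 : ℤ) : ZMod p) := by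
        rw [hαdef]; push_cast; ring
      rw [this, ZMod.stdAddChar_coe]
      rfl
  -- Step 2 : fiberwise over squares
  have step2 : ∑ x : ZMod p, ψ (α * x ^ 2)
      = ∑ b : ZMod p, (#{x : ZMod p | x ^ 2 = b} : ℂ) * ψ (α * b) := by
    rw [← Finset.sum_fiberwise' Finset.univ (fun x : ZMod p => x ^ 2) (fun b => ψ (α * b))]
    refine Finset.sum_congr rfl fun b _ => ?_
    rw [Finset.sum_const, nsmul_eq_mul]
  have hcard : ∀ b : ZMod p, (#{x : ZMod p | x ^ 2 = b} : ℂ)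
      = ((quadraticChar (ZMod p) b : ℤ) : ℂ) + 1 := by
    intro b
    have h0 := quadraticChar_card_sqrts hF b
    rw [Set.toFinset_setOf] at h0
    exact_mod_cast h0
  -- Step 3 : split the sum
  have step3 : ∑ b : ZMod p, (#{x : ZMod p | x ^ 2 = b} : ℂ) * ψ (α * b)
      = gaussSum χ (AddChar.mulShift ψ α) + ∑ b : ZMod p, (AddChar.mulShift ψ α) b := by
    rw [gaussSum]
    rw [← Finset.sum_add_distrib]
    refine Finset.sum_congr rfl fun b _ => ?_
    rw [hcard b, AddChar.mulShift_apply]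
    rw [hχdef]
    simp only [MulChar.ringHomComp_apply, eq_intCast]
    ring
  haveI : NeZero p := ⟨hp.pos.ne'⟩
  have hprim := ZMod.isPrimitive_stdAddChar p
  have hψ0 : (AddChar.mulShift ψ α) ≠ (0 : AddChar (ZMod p) ℂ) := by
    have h1 := hprim hα
    rw [hψdef]
    exact h1
  have step4 : ∑ b : ZMod p, (AddChar.mulShift ψ α) b = 0 :=
    AddChar.sum_eq_zero_iff_ne_zero.mpr hψ0
  have hinj : Function.Injective (Int.castRingHom ℂ) := fun x y hxy =>
    Int.cast_injective (α := ℂ) (by simpa using hxy)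
  have hχ1 : χ ≠ 1 := by
    rw [hχdef]
    exact (MulChar.ringHomComp_ne_one_iff hinj).mpr (quadraticChar_ne_one hF)
  have hχ2 : χ.IsQuadratic := (quadraticChar_isQuadratic (ZMod p)).comp _
  have hGsq : gaussSum χ ψ ^ 2 = χ (-1) * Fintype.card (ZMod p) := gaussSum_sq hχ1 hχ2 hprim
  have hu : IsUnit α := isUnit_iff_ne_zero.mpr hα
  have hms := gaussSum_mulShift χ ψ hu.unit
  have hχα2 : χ α ^ 2 = 1 := by
    rw [hχdef]
    simp only [MulChar.ringHomComp_apply, eq_intCast]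
    rw [← Int.cast_pow, quadraticChar_sq_one hα]
    norm_num
  have hGS2 : gaussSum χ (AddChar.mulShift ψ α) ^ 2 = χ (-1) * (p : ℂ) := by
    have h1 : (χ ↑hu.unit) ^ 2 * gaussSum χ (AddChar.mulShift ψ ↑hu.unit) ^ 2
        = gaussSum χ ψ ^ 2 := by
      rw [← mul_pow, hms]
    rw [IsUnit.unit_spec] at h1
    rw [hχα2, one_mul] at h1
    rw [h1, hGsq, ZMod.card]
  have hval : χ (-1) = epsP p ^ 2 := by
    rw [hχdef]
    simp only [MulChar.ringHomComp_apply, eq_intCast]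
    rw [quadraticChar_neg_one hF, ZMod.card, ZMod.χ₄_nat_eq_if_mod_four]
    have hmod : p % 2 = 1 := Nat.odd_iff.mp hpodd
    have h14 : p % 4 = 1 ∨ p % 4 = 3 := by omega
    rw [epsP]
    rcases h14 with h14 | h14
    · rw [if_pos h14]
      simp [hmod, h14]
    · rw [if_neg (by omega)]
      simp only [hmod, h14]
      norm_num [Complex.I_sq]
  rw [step1, step2, step3, step4, add_zero, hGS2, hval]

lemma epsP_pow_four (p : ℕ) : epsP p ^ 4 = 1 := by
  rw [epsP]
  split_ifs
  · norm_num
  · rw [show (4 : ℕ) = 2 * 2 by norm_num, pow_mul, Complex.I_sq]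
    norm_num

lemma SS_sq {p : ℕ} (hp : p.Prime) (hpodd : Odd p) (h a : ℕ) (ha : ¬ p ∣ a) :
    SS (p ^ h) a ^ 2 = epsP p ^ (2 * h) * ((p ^ h : ℕ) : ℂ) := by
  induction h using Nat.twoStepInduction with
  | zero =>
    rw [SS]
    simp [expQ_zero]
  | one =>
    rw [pow_one]
    simpa using SS_sq_prime hp hpodd a ha
  | more h ih _ =>
    rw [SS_reduction hp hpodd h a ha, mul_pow, ih]
    have h4 : epsP p ^ (2 * (h + 2)) = epsP p ^ (2 * h) * epsP p ^ 4 := by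
      rw [← pow_add]
      ring_nf
    rw [h4, epsP_pow_four, mul_one]
    push_cast
    ring

lemma ramanujan_sum {p : ℕ} (hp : p.Prime) (n k : ℕ) :
    ∑ a ∈ (Finset.range (p ^ (k + 1))).filter (fun a => ¬ p ∣ a),
        expQ (p ^ (k + 1)) (-(n : ℤ) * a)
      = (if ((p ^ (k + 1) : ℕ) : ℤ) ∣ (n : ℤ) then ((p ^ (k + 1) : ℕ) : ℂ) else 0)
        - (if ((p ^ k : ℕ) : ℤ) ∣ (n : ℤ) then ((p ^ k : ℕ) : ℂ) else 0) := by
  have hp0 : 0 < p := hp.pos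
  have hq0 : 0 < p ^ (k + 1) := Nat.pow_pos hp0
  have hk0 : 0 < p ^ k := Nat.pow_pos hp0
  set q := p ^ (k + 1) with hqdef
  have hsplit := Finset.sum_filter_add_sum_filter_not (Finset.range q)
    (fun a => ¬ p ∣ a) (fun a => expQ q (-(n : ℤ) * a))
  have hfull : ∑ a ∈ Finset.range q, expQ q (-(n : ℤ) * a)
      = if ((q : ℕ) : ℤ) ∣ (n : ℤ) then ((q : ℕ) : ℂ) else 0 := by
    rw [sum_expQ hq0 (-(n : ℤ))]
    congr 1
    · simp [dvd_neg]
  have hmult : ∑ a ∈ (Finset.range q).filter (fun a => ¬¬ p ∣ a), expQ q (-(n : ℤ) * a)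
      = if ((p ^ k : ℕ) : ℤ) ∣ (n : ℤ) then ((p ^ k : ℕ) : ℂ) else 0 := by
    have hbij : ∑ a ∈ (Finset.range q).filter (fun a => ¬¬ p ∣ a), expQ q (-(n : ℤ) * a)
        = ∑ b ∈ Finset.range (p ^ k), expQ q (-(n : ℤ) * ((p * b : ℕ) : ℤ)) := by
      refine Finset.sum_nbij' (i := fun a => a / p) (j := fun b => p * b) ?_ ?_ ?_ ?_ ?_
      · intro a hamem
        simp only [Finset.mem_filter, Finset.mem_range, not_not] at hamem
        obtain ⟨ha1, c, rfl⟩ := hamem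
        simp only [Finset.mem_range]
        rw [Nat.mul_div_cancel_left _ hp0]
        have hq' : q = p * p ^ k := by rw [hqdef]; ring
        rw [hq'] at ha1
        exact lt_of_mul_lt_mul_left ha1 (Nat.zero_le p)
      · intro b hb
        simp only [Finset.mem_range] at hb
        simp only [Finset.mem_filter, Finset.mem_range, not_not]
        constructor
        · have hq' : q = p * p ^ k := by rw [hqdef]; ring
          rw [hq']
          exact (Nat.mul_lt_mul_left hp0).mpr hb
        · exact Dvd.intro _ rfl
      · intro a hamem
        simp only [Finset.mem_filter, not_not] at hamem
        obtain ⟨_, c, rfl⟩ := hamem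
        show p * (p * c / p) = p * c
        rw [Nat.mul_div_cancel_left _ hp0]
      · intro b _
        show p * b / p = b
        rw [Nat.mul_div_cancel_left _ hp0]
      · intro a hamem
        simp only [Finset.mem_filter, not_not] at hamem
        obtain ⟨_, c, rfl⟩ := hamem
        show expQ q (-(n : ℤ) * (p * c : ℕ)) = expQ q (-(n : ℤ) * ((p * (p * c / p) : ℕ) : ℤ))
        rw [Nat.mul_div_cancel_left _ hp0]
    rw [hbij]
    have hterm : ∀ b ∈ Finset.range (p ^ k),
        expQ q (-(n : ℤ) * ((p * b : ℕ) : ℤ)) = expQ (p ^ k) (-(n : ℤ) * b) := by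
      intro b _
      have harg : -(n : ℤ) * ((p * b : ℕ) : ℤ) = (p : ℤ) * (-(n : ℤ) * b) := by
        push_cast; ring
      have hq' : q = p * p ^ k := by rw [hqdef]; ring
      rw [harg, hq', expQ_cancel p (p ^ k) hp0.ne']
    rw [Finset.sum_congr rfl hterm, sum_expQ hk0 (-(n : ℤ))]
    congr 1
    · simp [dvd_neg]
  rw [hmult, hfull] at hsplit
  linear_combination hsplit

/-- Explicit values of `A_d(p^h, n)` for even `d`, odd prime `p` and `n ≥ 1`,
in terms of `v = ord_p(n)`. -/
theorem Acoef_prime_pow_even (d p n : ℕ) (hd : 1 ≤ d) (hdeven : Even d)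
    (hp : p.Prime) (hpodd : Odd p) (hn : 1 ≤ n) (h : ℕ) (hh : 1 ≤ h) :
    (h ≤ padicValNat p n →
      Acoef d (p ^ h) n =
        (((p : ℂ) - 1) / (p : ℂ)) * (epsP p ^ d * (p : ℂ) ^ (1 - (d : ℤ) / 2)) ^ h) ∧
    (h = padicValNat p n + 1 →
      Acoef d (p ^ h) n =
        -((epsP p ^ d * (p : ℂ) ^ (1 - (d : ℤ) / 2)) ^ (padicValNat p n + 1)) * (p : ℂ)⁻¹) ∧
    (padicValNat p n + 1 < h → Acoef d (p ^ h) n = 0) := by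
  haveI := Fact.mk hp
  obtain ⟨k, rfl⟩ : ∃ k, h = k + 1 := ⟨h - 1, by omega⟩
  obtain ⟨m, hm⟩ := hdeven
  have hd2 : d = 2 * m := by omega
  subst hd2
  have hm1 : 1 ≤ m := by omega
  set v := padicValNat p n with hvdef
  set q := p ^ (k + 1) with hqdef
  have hq1 : 1 ≤ q := Nat.one_le_pow _ _ hp.pos
  have hqgt1 : 1 < q := Nat.one_lt_pow (by omega) hp.one_lt
  have hx : (p : ℂ) ≠ 0 := Nat.cast_ne_zero.mpr hp.pos.ne'
  have hε : epsP p ≠ 0 := by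
    rw [epsP]; split_ifs
    · exact one_ne_zero
    · exact Complex.I_ne_zero
  -- the zpow in the statement
  have hzpow : (p : ℂ) ^ ((1 : ℤ) - (2 * m : ℕ) / 2) = (p : ℂ) / (p : ℂ) ^ m := by
    have he : (1 : ℤ) - ((2 * m : ℕ) : ℤ) / 2 = 1 - (m : ℤ) := by
      push_cast; omega
    rw [he, zpow_sub₀ hx, zpow_one, zpow_natCast]
  -- rewrite Acoef
  have hfilter : (Finset.Icc 1 q).filter (fun a => Nat.gcd a q = 1)
      = (Finset.range q).filter (fun a => ¬ p ∣ a) := by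
    ext a
    simp only [Finset.mem_filter, Finset.mem_Icc, Finset.mem_range]
    have hco : Nat.gcd a q = 1 ↔ ¬ p ∣ a := by
      rw [hqdef]
      rw [show (Nat.gcd a (p ^ (k + 1)) = 1) ↔ Nat.Coprime a (p ^ (k + 1)) from Iff.rfl]
      rw [Nat.coprime_pow_right_iff (by omega)]
      rw [Nat.coprime_comm]
      exact hp.coprime_iff_not_dvd
    constructor
    · rintro ⟨⟨h1, h2⟩, h3⟩
      refine ⟨?_, hco.mp h3⟩
      rcases Nat.lt_or_ge a q with hlt | hge
      · exact hlt
      · exfalso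
        have : a = q := by omega
        subst this
        rw [Nat.gcd_self] at h3
        omega
    · rintro ⟨h1, h2⟩
      refine ⟨⟨?_, by omega⟩, hco.mpr h2⟩
      rcases Nat.eq_zero_or_pos a with rfl | hpos
      · exact absurd (dvd_zero p) h2
      · exact hpos
  set K : ℂ := epsP p ^ (2 * m * (k + 1)) * (p : ℂ) ^ ((k + 1) * m) / (p : ℂ) ^ ((k + 1) * (2 * m))
    with hKdef
  have hpk : (p : ℂ) ^ ((k + 1) * (2 * m)) = (p : ℂ) ^ ((k + 1) * m) * (p : ℂ) ^ ((k + 1) * m) := by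
    rw [← pow_add]; ring_nf
  have hAco : Acoef (2 * m) q n
      = K * ∑ a ∈ (Finset.range q).filter (fun a => ¬ p ∣ a), expQ q (-(n : ℤ) * a) := by
    rw [Acoef, hfilter, Finset.mul_sum]
    refine Finset.sum_congr rfl fun a hamem => ?_
    have hpa : ¬ p ∣ a := (Finset.mem_filter.mp hamem).2
    have hexp : Complex.exp (-(2 * π * I) * (n : ℂ) * (a : ℂ) / (q : ℂ))
        = expQ q (-(n : ℤ) * a) := by
      rw [expQ]
      congr 1
      push_cast
      ring
    rw [hexp, gaussSumS_eq_SS hq1, mul_pow]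
    have hSS : SS q a ^ (2 * m) = (SS q a ^ 2) ^ m := by rw [← pow_mul]
    rw [hSS, hqdef, SS_sq hp hpodd (k + 1) a hpa]
    rw [hKdef]
    rw [hpk]
    push_cast
    field_simp
    ring_nf
    simp only [inv_pow]
    field_simp
  have hram := ramanujan_sum hp n k
  rw [← hqdef] at hram
  have hdvd1 : (((q : ℕ) : ℤ) ∣ (n : ℤ)) ↔ (k + 1 ≤ v) := by
    rw [Int.natCast_dvd_natCast, hqdef, hvdef]
    exact padicValNat_dvd_iff_le (by omega)
  have hdvd2 : (((p ^ k : ℕ) : ℤ) ∣ (n : ℤ)) ↔ (k ≤ v) := by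
    rw [Int.natCast_dvd_natCast, hvdef]
    exact padicValNat_dvd_iff_le (by omega)
  refine ⟨?_, ?_, ?_⟩
  · -- case 1 : k + 1 ≤ v
    intro hcase
    rw [hAco, hram, if_pos (hdvd1.mpr hcase), if_pos (hdvd2.mpr (by omega)), hzpow, hKdef]
    rw [hpk]
    have hqc : ((q : ℕ) : ℂ) = (p : ℂ) ^ (k + 1) := by rw [hqdef]; push_cast; ring
    rw [hqc]
    push_cast
    field_simp
    ring_nf
    simp only [inv_pow]
    field_simp
  · -- case 2 : k + 1 = v + 1
    intro hcase
    have hkv : k = v := by omega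
    subst hkv
    rw [hAco, hram, if_neg, if_pos (hdvd2.mpr le_rfl), hzpow, hKdef]
    · rw [hpk]
      push_cast
      field_simp
      ring_nf
      simp only [inv_pow]
      field_simp
    · rw [hdvd1]; omega
  · -- case 3 : v + 1 < k + 1
    intro hcase
    rw [hAco, hram, if_neg, if_neg]
    · ring
    · rw [hdvd2]; omega
    · rw [hdvd1]; omega
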